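/- For every γ ∈ (0,1) there exists an integer K₁ ≥ 2 (depending only on γ) such that for all integers k ≥ K₁ the quantity H_k = −(2γ(k−2)/(k+3γ−2)) · { k^{γ−1}((k−1)^γ + 2γ k^{γ−1}) − (k−1)^{γ−1}(k−2)^{γ−1}(k+3γ−2) } satisfies H_k ≥ 0 and H_{k+1} ≤ H_k. -/

import Mathlib

open Set Filter Topology

/-- The coefficient H_k of the distance-square term in the discrete Lyapunov
function for underdamped NAG. -/
noncomputable def coeffH (γ : ℝ) (k : ℕ) : ℝ :=
  -(2 * γ * ((k : ℝ) - 2) / ((k : ℝ) + 3 * γ - 2)) *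
    ((k : ℝ) ^ (γ - 1) * (((k : ℝ) - 1) ^ γ + 2 * γ * (k : ℝ) ^ (γ - 1)) -
      ((k : ℝ) - 1) ^ (γ - 1) * ((k : ℝ) - 2) ^ (γ - 1) * ((k : ℝ) + 3 * γ - 2))

/- Auxiliary definitions: the real-variable version of `coeffH`, its factored
form, derivative and rescaled asymptotic profiles. -/

noncomputable def fH (γ x : ℝ) : ℝ :=
  -(2 * γ * (x - 2) / (x + 3 * γ - 2)) *
    (x ^ (γ - 1) * ((x - 1) ^ γ + 2 * γ * x ^ (γ - 1)) -
      (x - 1) ^ (γ - 1) * (x - 2) ^ (γ - 1) * (x + 3 * γ - 2))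

noncomputable def PsiH (γ x : ℝ) : ℝ :=
  (x-1)^(γ-1)*(x-2)^(γ-1)*(x+3*γ-2) - x^(γ-1)*(x-1)^γ - 2*γ*(x^(γ-1)*x^(γ-1))

noncomputable def PsiH' (γ x : ℝ) : ℝ :=
  (γ-1)*(x-1)^(γ-2)*(x-2)^(γ-1)*(x+3*γ-2)
  + (γ-1)*(x-1)^(γ-1)*(x-2)^(γ-2)*(x+3*γ-2)
  + (x-1)^(γ-1)*(x-2)^(γ-1)
  - (γ-1)*x^(γ-2)*(x-1)^γ - γ*(x^(γ-1)*(x-1)^(γ-1))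
  - 4*γ*(γ-1)*(x^(γ-1)*x^(γ-2))

noncomputable def DH (γ x : ℝ) : ℝ :=
  6*γ^2/(x+3*γ-2)^2 * PsiH γ x + (2*γ*(x-2)/(x+3*γ-2)) * PsiH' γ x

noncomputable def PhiH (γ u : ℝ) : ℝ :=
  (1-u)^(γ-1)*(1-2*u)^(γ-1)*(1+(3*γ-2)*u) - (1-u)^γ

noncomputable def ThH (γ u : ℝ) : ℝ :=
  (γ-1)*(1-u)^(γ-2)*(1-2*u)^(γ-1)*(1+(3*γ-2)*u)
  + (γ-1)*(1-u)^(γ-1)*(1-2*u)^(γ-2)*(1+(3*γ-2)*u)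
  + (1-u)^(γ-1)*(1-2*u)^(γ-1)
  - (γ-1)*(1-u)^γ - γ*(1-u)^(γ-1)

lemma fH_eq_mul (γ x : ℝ) : fH γ x = (2*γ*(x-2)/(x+3*γ-2)) * PsiH γ x := by
  unfold fH PsiH; ring

lemma hasDerivAt_one_sub_rpow (c a : ℝ) :
    HasDerivAt (fun u : ℝ => (1 - c*u)^a) (-(c*a)) 0 := by
  have h : HasDerivAt (fun u : ℝ => 1 - c*u) (-c) 0 := by
    simpa using ((hasDerivAt_id (0:ℝ)).const_mul c).const_sub 1
  have h2 := h.rpow_const (p := a) (by left; norm_num)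
  simpa using h2

lemma hasDerivAt_PhiH (γ : ℝ) : HasDerivAt (PhiH γ) (1 + γ) 0 := by
  have dA : HasDerivAt (fun u : ℝ => (1-u)^(γ-1)) (-(γ-1)) 0 := by
    have := hasDerivAt_one_sub_rpow 1 (γ-1); simpa using this
  have dB : HasDerivAt (fun u : ℝ => (1-2*u)^(γ-1)) (-(2*(γ-1))) 0 :=
    hasDerivAt_one_sub_rpow 2 (γ-1)
  have dC : HasDerivAt (fun u : ℝ => 1+(3*γ-2)*u) (3*γ-2) 0 := by
    simpa using ((hasDerivAt_id (0:ℝ)).const_mul (3*γ-2)).const_add 1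
  have dD : HasDerivAt (fun u : ℝ => (1-u)^γ) (-γ) 0 := by
    have := hasDerivAt_one_sub_rpow 1 γ; simpa using this
  have h := ((dA.mul dB).mul dC).sub dD
  unfold PhiH
  convert h using 1
  · rfl
  · rfl
  · rfl
  norm_num [Real.one_rpow]
  ring

lemma PhiH_zero (γ : ℝ) : PhiH γ 0 = 0 := by
  simp [PhiH]

lemma hasDerivAt_ThH (γ : ℝ) : HasDerivAt (ThH γ) ((2*γ-2)*(1+γ)) 0 := by
  have dA : HasDerivAt (fun u : ℝ => (1-u)^(γ-1)) (-(γ-1)) 0 := by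
    have := hasDerivAt_one_sub_rpow 1 (γ-1); simpa using this
  have dA2 : HasDerivAt (fun u : ℝ => (1-u)^(γ-2)) (-(γ-2)) 0 := by
    have := hasDerivAt_one_sub_rpow 1 (γ-2); simpa using this
  have dB : HasDerivAt (fun u : ℝ => (1-2*u)^(γ-1)) (-(2*(γ-1))) 0 :=
    hasDerivAt_one_sub_rpow 2 (γ-1)
  have dB2 : HasDerivAt (fun u : ℝ => (1-2*u)^(γ-2)) (-(2*(γ-2))) 0 :=
    hasDerivAt_one_sub_rpow 2 (γ-2)
  have dC : HasDerivAt (fun u : ℝ => 1+(3*γ-2)*u) (3*γ-2) 0 := by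
    simpa using ((hasDerivAt_id (0:ℝ)).const_mul (3*γ-2)).const_add 1
  have dD : HasDerivAt (fun u : ℝ => (1-u)^γ) (-γ) 0 := by
    have := hasDerivAt_one_sub_rpow 1 γ; simpa using this
  have h := (((((dA2.mul dB).mul dC).const_mul (γ-1)).add
      (((dA.mul dB2).mul dC).const_mul (γ-1))).add (dA.mul dB)).sub
      ((dD.const_mul (γ-1)).add (dA.const_mul γ))
  unfold ThH
  convert h using 1
  · rfl
  · rfl
  · funext u; simp only [Pi.add_apply, Pi.sub_apply, Pi.mul_apply]; ring
  norm_num [Real.one_rpow]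
  ring

lemma ThH_zero (γ : ℝ) : ThH γ 0 = 0 := by
  simp [ThH]; ring

lemma tendsto_mul_comp_inv {F : ℝ → ℝ} {c : ℝ} (h0 : F 0 = 0) (h : HasDerivAt F c 0) :
    Tendsto (fun x : ℝ => x * F x⁻¹) atTop (𝓝 c) := by
  have h1 := h.tendsto_slope_zero
  have h2 : Tendsto (fun x : ℝ => x⁻¹) atTop (𝓝[≠] (0:ℝ)) := by
    apply tendsto_nhdsWithin_of_tendsto_nhds_of_eventually_within _ tendsto_inv_atTop_zero
    filter_upwards [eventually_gt_atTop 0] with x hx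
    simpa using (inv_ne_zero hx.ne')
  have h3 := h1.comp h2
  apply h3.congr'
  filter_upwards [eventually_gt_atTop 0] with x hx
  simp [Function.comp, h0, smul_eq_mul, inv_inv]

lemma keyI1 (γ : ℝ) {x : ℝ} (hx : 2 < x) :
    x^(2-2*γ) * PsiH γ x = x * PhiH γ x⁻¹ - 2*γ := by
  have hx0 : (0:ℝ) < x := by linarith
  have h1 : (0:ℝ) ≤ 1 - x⁻¹ := by
    rw [sub_nonneg, inv_le_one_iff₀]; right; linarith
  have h2 : (0:ℝ) ≤ 1 - 2*x⁻¹ := by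
    have : 2*x⁻¹ ≤ 1 := by rw [mul_inv_le_iff₀ hx0]; linarith
    linarith
  have s1 : ∀ a : ℝ, (x-1)^a = x^a*(1-x⁻¹)^a := by
    intro a
    rw [← Real.mul_rpow hx0.le h1]
    congr 1
    field_simp
  have s2 : ∀ a : ℝ, (x-2)^a = x^a*(1-2*x⁻¹)^a := by
    intro a
    rw [← Real.mul_rpow hx0.le h2]
    congr 1
    field_simp
  have hxB : x + 3*γ - 2 = x * (1 + (3*γ-2)*x⁻¹) := by
    field_simp
    ring
  have R1 : x^(2-2*γ) * x^(γ-1) * x^(γ-1) = 1 := by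
    rw [← Real.rpow_add hx0, ← Real.rpow_add hx0,
      show (2-2*γ) + (γ-1) + (γ-1) = 0 by ring, Real.rpow_zero]
  have R2 : x^(2-2*γ) * x^(γ-1) * x^γ = x := by
    rw [← Real.rpow_add hx0, ← Real.rpow_add hx0,
      show (2-2*γ) + (γ-1) + γ = 1 by ring, Real.rpow_one]
  unfold PsiH PhiH
  rw [s1 (γ-1), s1 γ, s2 (γ-1), hxB]
  linear_combination (x*(1+(3*γ-2)*x⁻¹)*((1-x⁻¹)^(γ-1)*(1-2*x⁻¹)^(γ-1)) - 2*γ) * R1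
    - (1-x⁻¹)^γ * R2

lemma keyI3 (γ : ℝ) {x : ℝ} (hx : 2 < x) :
    x^(3-2*γ) * PsiH' γ x = x * ThH γ x⁻¹ - 4*γ*(γ-1) := by
  have hx0 : (0:ℝ) < x := by linarith
  have h1 : (0:ℝ) ≤ 1 - x⁻¹ := by
    rw [sub_nonneg, inv_le_one_iff₀]; right; linarith
  have h2 : (0:ℝ) ≤ 1 - 2*x⁻¹ := by
    have : 2*x⁻¹ ≤ 1 := by rw [mul_inv_le_iff₀ hx0]; linarith
    linarith
  have s1 : ∀ a : ℝ, (x-1)^a = x^a*(1-x⁻¹)^a := by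
    intro a
    rw [← Real.mul_rpow hx0.le h1]
    congr 1
    field_simp
  have s2 : ∀ a : ℝ, (x-2)^a = x^a*(1-2*x⁻¹)^a := by
    intro a
    rw [← Real.mul_rpow hx0.le h2]
    congr 1
    field_simp
  have hxB : x + 3*γ - 2 = x * (1 + (3*γ-2)*x⁻¹) := by
    field_simp
    ring
  have R3 : x^(3-2*γ) * x^(γ-2) * x^(γ-1) = 1 := by
    rw [← Real.rpow_add hx0, ← Real.rpow_add hx0,
      show (3-2*γ) + (γ-2) + (γ-1) = 0 by ring, Real.rpow_zero]
  have R4 : x^(3-2*γ) * x^(γ-1) * x^(γ-1) = x := by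
    rw [← Real.rpow_add hx0, ← Real.rpow_add hx0,
      show (3-2*γ) + (γ-1) + (γ-1) = 1 by ring, Real.rpow_one]
  have R5 : x^(3-2*γ) * x^(γ-2) * x^γ = x := by
    rw [← Real.rpow_add hx0, ← Real.rpow_add hx0,
      show (3-2*γ) + (γ-2) + γ = 1 by ring, Real.rpow_one]
  unfold PsiH' ThH
  rw [s1 (γ-2), s1 (γ-1), s1 γ, s2 (γ-1), s2 (γ-2), hxB]
  linear_combination ((γ-1)*x*(1+(3*γ-2)*x⁻¹)*((1-x⁻¹)^(γ-2)*(1-2*x⁻¹)^(γ-1)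
      + (1-x⁻¹)^(γ-1)*(1-2*x⁻¹)^(γ-2)) - 4*γ*(γ-1)) * R3
    + ((1-x⁻¹)^(γ-1)*(1-2*x⁻¹)^(γ-1) - γ*(1-x⁻¹)^(γ-1)) * R4
    - (γ-1)*(1-x⁻¹)^γ * R5

lemma keyI2 (γ : ℝ) {x : ℝ} (hγ : γ ∈ Set.Ioo (0:ℝ) 1) (hx : 2 < x) :
    x^(3-2*γ) * DH γ x
      = (6*γ^2*(x/(x+3*γ-2))^2) * (x^(2-2*γ)*PsiH γ x) * x⁻¹
        + (2*γ*(x-2)/(x+3*γ-2)) * (x^(3-2*γ)*PsiH' γ x) := by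
  have hx0 : (0:ℝ) < x := by linarith
  have hB : (0:ℝ) < x + 3*γ - 2 := by
    have := hγ.1; linarith
  have R6 : x * x^(2-2*γ) = x^(3-2*γ) := by
    nth_rewrite 1 [← Real.rpow_one x]
    rw [← Real.rpow_add hx0, show (1:ℝ)+(2-2*γ) = 3-2*γ by ring]
  unfold DH
  rw [← R6]
  field_simp

lemma hasDerivAt_fH (γ : ℝ) {x : ℝ} (hγ : γ ∈ Set.Ioo (0:ℝ) 1) (hx : 2 < x) :
    HasDerivAt (fH γ) (DH γ x) x := by
  have hx0 : (0:ℝ) < x := by linarith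
  have hx1 : (0:ℝ) < x - 1 := by linarith
  have hx2 : (0:ℝ) < x - 2 := by linarith
  have hB : (0:ℝ) < x + 3*γ - 2 := by have := hγ.1; linarith
  have did : HasDerivAt (fun y : ℝ => y) 1 x := hasDerivAt_id x
  have d1 : HasDerivAt (fun y : ℝ => y ^ (γ-1)) ((γ-1)*x^(γ-1-1)) x :=
    Real.hasDerivAt_rpow_const (Or.inl hx0.ne')
  have dm1 : HasDerivAt (fun y : ℝ => y - 1) 1 x := did.sub_const 1
  have dm2 : HasDerivAt (fun y : ℝ => y - 2) 1 x := did.sub_const 2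
  have d2 : HasDerivAt (fun y : ℝ => (y-1) ^ γ) (1*γ*(x-1)^(γ-1)) x :=
    dm1.rpow_const (Or.inl hx1.ne')
  have d3 : HasDerivAt (fun y : ℝ => (y-1) ^ (γ-1)) (1*(γ-1)*(x-1)^(γ-1-1)) x :=
    dm1.rpow_const (Or.inl hx1.ne')
  have d4 : HasDerivAt (fun y : ℝ => (y-2) ^ (γ-1)) (1*(γ-1)*(x-2)^(γ-1-1)) x :=
    dm2.rpow_const (Or.inl hx2.ne')
  have dB : HasDerivAt (fun y : ℝ => y + 3*γ - 2) 1 x := by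
    simpa using (did.add_const (3*γ)).sub_const 2
  have dA : HasDerivAt (fun y : ℝ => 2*γ*(y-2)) (2*γ*1) x := dm2.const_mul (2*γ)
  have dg : HasDerivAt (fun y : ℝ => 2*γ*(y-2)/(y+3*γ-2))
      ((2*γ*1*(x+3*γ-2) - 2*γ*(x-2)*1)/(x+3*γ-2)^2) x := dA.div dB hB.ne'
  have dq : HasDerivAt (fun y : ℝ => y^(γ-1)*((y-1)^γ + 2*γ*y^(γ-1)))
      ((γ-1)*x^(γ-1-1)*((x-1)^γ + 2*γ*x^(γ-1))
        + x^(γ-1)*(1*γ*(x-1)^(γ-1) + 2*γ*((γ-1)*x^(γ-1-1)))) x :=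
    d1.mul (d2.add (d1.const_mul (2*γ)))
  have dp : HasDerivAt (fun y : ℝ => (y-1)^(γ-1)*(y-2)^(γ-1)*(y+3*γ-2))
      ((1*(γ-1)*(x-1)^(γ-1-1)*(x-2)^(γ-1) + (x-1)^(γ-1)*(1*(γ-1)*(x-2)^(γ-1-1)))*(x+3*γ-2)
        + (x-1)^(γ-1)*(x-2)^(γ-1)*1) x := (d3.mul d4).mul dB
  have dh := (dg.neg).mul (dq.sub dp)
  have hfun : fH γ = fun y => -(2*γ*(y-2)/(y+3*γ-2)) *
      (y^(γ-1)*((y-1)^γ + 2*γ*y^(γ-1)) - (y-1)^(γ-1)*(y-2)^(γ-1)*(y+3*γ-2)) := rfl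
  rw [hfun]
  convert dh using 1
  · rfl
  · rfl
  · rfl
  simp only [Pi.neg_apply, Pi.sub_apply]
  unfold DH PsiH PsiH'
  simp only [show γ-1-1 = γ-2 by ring]
  field_simp
  ring

lemma tendsto_Binv (γ : ℝ) :
    Tendsto (fun x : ℝ => (x + 3*γ - 2)⁻¹) atTop (𝓝 0) := by
  have hBtop : Tendsto (fun x : ℝ => x + 3*γ - 2) atTop atTop := by
    have := tendsto_atTop_add_const_right atTop (3*γ-2) (tendsto_id (α := ℝ))
    apply this.congr
    intro x; simp only [id_eq]; ring
  exact hBtop.inv_tendsto_atTop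

lemma tendsto_g (γ : ℝ) (hγ : γ ∈ Set.Ioo (0:ℝ) 1) :
    Tendsto (fun x : ℝ => 2*γ*(x-2)/(x+3*γ-2)) atTop (𝓝 (2*γ)) := by
  have h : Tendsto (fun x : ℝ => 2*γ - 6*γ^2*(x+3*γ-2)⁻¹) atTop (𝓝 (2*γ - 6*γ^2*0)) :=
    tendsto_const_nhds.sub ((tendsto_Binv γ).const_mul (6*γ^2))
  rw [show 2*γ - 6*γ^2*0 = 2*γ by ring] at h
  apply h.congr'
  filter_upwards [eventually_gt_atTop 2] with x hx
  have hB : (0:ℝ) < x + 3*γ - 2 := by have := hγ.1; linarith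
  rw [eq_div_iff hB.ne']
  linear_combination (-6*γ^2) * mul_inv_cancel₀ hB.ne'

lemma tendsto_gsq (γ : ℝ) (hγ : γ ∈ Set.Ioo (0:ℝ) 1) :
    Tendsto (fun x : ℝ => 6*γ^2*(x/(x+3*γ-2))^2) atTop (𝓝 (6*γ^2)) := by
  have h1 : Tendsto (fun x : ℝ => 1 - (3*γ-2)*(x+3*γ-2)⁻¹) atTop (𝓝 (1 - (3*γ-2)*0)) :=
    tendsto_const_nhds.sub ((tendsto_Binv γ).const_mul (3*γ-2))
  rw [show 1 - (3*γ-2)*0 = 1 by ring] at h1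
  have h2 : Tendsto (fun x : ℝ => x/(x+3*γ-2)) atTop (𝓝 1) := by
    apply h1.congr'
    filter_upwards [eventually_gt_atTop 2] with x hx
    have hB : (0:ℝ) < x + 3*γ - 2 := by have := hγ.1; linarith
    field_simp
    ring
  have h3 := (h2.pow 2).const_mul (6*γ^2)
  simpa using h3

lemma tendsto_T1 (γ : ℝ) (hγ : γ ∈ Set.Ioo (0:ℝ) 1) :
    Tendsto (fun x : ℝ => x^(2-2*γ) * PsiH γ x) atTop (𝓝 (1-γ)) := by
  have t1 : Tendsto (fun x : ℝ => x * PhiH γ x⁻¹ - 2*γ) atTop (𝓝 (1+γ-2*γ)) :=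
    (tendsto_mul_comp_inv (PhiH_zero γ) (hasDerivAt_PhiH γ)).sub_const _
  rw [show 1+γ-2*γ = 1-γ by ring] at t1
  apply t1.congr'
  filter_upwards [eventually_gt_atTop 2] with x hx
  exact (keyI1 γ hx).symm

lemma tendsto_T3 (γ : ℝ) (hγ : γ ∈ Set.Ioo (0:ℝ) 1) :
    Tendsto (fun x : ℝ => x^(3-2*γ) * PsiH' γ x) atTop (𝓝 ((2*γ-2)*(1-γ))) := by
  have t1 : Tendsto (fun x : ℝ => x * ThH γ x⁻¹ - 4*γ*(γ-1)) atTop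
      (𝓝 ((2*γ-2)*(1+γ) - 4*γ*(γ-1))) :=
    (tendsto_mul_comp_inv (ThH_zero γ) (hasDerivAt_ThH γ)).sub_const _
  rw [show (2*γ-2)*(1+γ) - 4*γ*(γ-1) = (2*γ-2)*(1-γ) by ring] at t1
  apply t1.congr'
  filter_upwards [eventually_gt_atTop 2] with x hx
  exact (keyI3 γ hx).symm

lemma tendsto_TD (γ : ℝ) (hγ : γ ∈ Set.Ioo (0:ℝ) 1) :
    Tendsto (fun x : ℝ => x^(3-2*γ) * DH γ x) atTop (𝓝 (2*γ*((2*γ-2)*(1-γ)))) := by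
  have h := (((tendsto_gsq γ hγ).mul (tendsto_T1 γ hγ)).mul tendsto_inv_atTop_zero).add
    ((tendsto_g γ hγ).mul (tendsto_T3 γ hγ))
  rw [show 6*γ^2*(1-γ)*0 + 2*γ*((2*γ-2)*(1-γ)) = 2*γ*((2*γ-2)*(1-γ)) by ring] at h
  apply h.congr'
  filter_upwards [eventually_gt_atTop 2] with x hx
  exact (keyI2 γ hγ hx).symm

lemma tendsto_Tf (γ : ℝ) (hγ : γ ∈ Set.Ioo (0:ℝ) 1) :
    Tendsto (fun x : ℝ => x^(2-2*γ) * fH γ x) atTop (𝓝 (2*γ*(1-γ))) := by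
  have h := (tendsto_g γ hγ).mul (tendsto_T1 γ hγ)
  apply h.congr
  intro x
  rw [fH_eq_mul]
  ring

/-- For every γ ∈ (0,1) there exists an integer K₁ ≥ 2 (depending
only on γ) such that for all integers k ≥ K₁ the coefficient H_k satisfies
H_k ≥ 0 and H_{k+1} ≤ H_k. -/
theorem coeff_H_eventually_nonneg_nonincreasing
    (γ : ℝ) (hγ : γ ∈ Set.Ioo (0 : ℝ) 1) :
    ∃ K₁ : ℕ, 2 ≤ K₁ ∧ ∀ k : ℕ, K₁ ≤ k →
      0 ≤ coeffH γ k ∧ coeffH γ (k + 1) ≤ coeffH γ k := by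
  obtain ⟨hγ0, hγ1⟩ := hγ
  have hγ' : γ ∈ Set.Ioo (0:ℝ) 1 := ⟨hγ0, hγ1⟩
  -- eventually fH > 0
  have hf : ∀ᶠ x : ℝ in atTop, 0 < fH γ x := by
    have h1 : (0:ℝ) < 2*γ*(1-γ) := by nlinarith
    have h2 := (tendsto_Tf γ hγ').eventually_const_lt (show (0:ℝ) < 2*γ*(1-γ) from h1)
    filter_upwards [h2, eventually_gt_atTop (0:ℝ)] with x hx hx0
    have hp : (0:ℝ) < x^(2-2*γ) := Real.rpow_pos_of_pos hx0 _
    nlinarith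
  -- eventually DH < 0
  have hD : ∀ᶠ x : ℝ in atTop, DH γ x < 0 := by
    have h1 : 2*γ*((2*γ-2)*(1-γ)) < 0 := by
      nlinarith [mul_pos hγ0 (mul_pos (sub_pos.mpr hγ1) (sub_pos.mpr hγ1))]
    have h2 := (tendsto_TD γ hγ').eventually_lt_const h1
    filter_upwards [h2, eventually_gt_atTop (0:ℝ)] with x hx hx0
    have hp : (0:ℝ) < x^(3-2*γ) := Real.rpow_pos_of_pos hx0 _
    nlinarith
  obtain ⟨X1, hX1⟩ := eventually_atTop.mp hf
  obtain ⟨X2, hX2⟩ := eventually_atTop.mp hD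
  set X : ℝ := max (max X1 X2) 3 with hXdef
  have hX3 : (3:ℝ) ≤ X := le_max_right _ _
  have hXX1 : X1 ≤ X := le_trans (le_max_left _ _) (le_max_left _ _)
  have hXX2 : X2 ≤ X := le_trans (le_max_right _ _) (le_max_left _ _)
  -- f is strictly antitone on [X, ∞)
  have hanti : StrictAntiOn (fH γ) (Set.Ici X) := by
    apply strictAntiOn_of_deriv_neg (convex_Ici X)
    · intro x hx
      have hx2 : 2 < x := by have := mem_Ici.mp hx; linarith
      exact ((hasDerivAt_fH γ hγ' hx2).continuousAt).continuousWithinAt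
    · intro x hx
      rw [interior_Ici] at hx
      have hx2 : 2 < x := by have := mem_Ioi.mp hx; linarith
      rw [(hasDerivAt_fH γ hγ' hx2).deriv]
      exact hX2 x (le_trans hXX2 (le_of_lt (mem_Ioi.mp hx)))
  refine ⟨max 3 ⌈X⌉₊, by omega, ?_⟩
  intro k hk
  have hk3 : 3 ≤ k := le_trans (le_max_left _ _) hk
  have hkX : X ≤ (k:ℝ) := by
    have : ⌈X⌉₊ ≤ k := le_trans (le_max_right _ _) hk
    exact le_trans (Nat.le_ceil X) (by exact_mod_cast Nat.cast_le.mpr this)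
  have hkX1 : X ≤ (k:ℝ) + 1 := by linarith
  have hc1 : coeffH γ k = fH γ (k:ℝ) := rfl
  have hc2 : coeffH γ (k+1) = fH γ ((k:ℝ)+1) := by
    unfold coeffH fH
    push_cast
    ring_nf
  constructor
  · rw [hc1]
    exact le_of_lt (hX1 (k:ℝ) (le_trans hXX1 hkX))
  · rw [hc1, hc2]
    exact le_of_lt (hanti (mem_Ici.mpr hkX) (mem_Ici.mpr hkX1) (by linarith))
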